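/- Let N₀, m ≥ 1 be integers, K ≥ 1 an integer, r ∈ (0,1], b ≥ 0 with (K−1)·b/√N₀ < r, and set η = r/(r − (K−1)b/√N₀). Then Σ_{i=N₀+1}^{N₀+m} (r + b/√i)^K ≤ m·r^K + 2ηK r^{K−1} b (√(N₀+m) − √N₀) ≤ m·r^K + 2ηK r^{K−1} b √m. -/

import Mathlib

lemma aux_bern (n : ℕ) (t : ℝ) (ht : 0 ≤ t) (hnt : (n:ℝ) * t < 1) :
    (1 + t) ^ n ≤ 1 / (1 - (n:ℝ) * t) := by
  rcases Nat.eq_zero_or_pos n with h | h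
  · subst h; simp
  · have ht1 : t < 1 := by
      calc t = 1 * t := (one_mul t).symm
      _ ≤ (n:ℝ) * t := by
        apply mul_le_mul_of_nonneg_right _ ht
        exact_mod_cast h
      _ < 1 := hnt
    have h1 : 1 - (n:ℝ)*t ≤ (1 - t)^n := by
      have := one_add_mul_le_pow (a := -t) (by linarith) n
      rw [← sub_eq_add_neg] at this
      linarith
    have h2 : (1+t)^n * (1-t)^n ≤ 1 := by
      rw [← mul_pow]
      apply pow_le_one₀ (by nlinarith) (by nlinarith)
    rw [le_div_iff₀ (by linarith)]
    calc (1+t)^n * (1 - (n:ℝ)*t) ≤ (1+t)^n * (1-t)^n := by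
          apply mul_le_mul_of_nonneg_left h1 (by positivity)
    _ ≤ 1 := h2

lemma aux_pow (K : ℕ) (r x : ℝ) (hr : 0 ≤ r) (hx : 0 ≤ x) :
    (r + x) ^ (K+1) ≤ r ^ (K+1) + (K+1 : ℝ) * x * (r + x) ^ K := by
  induction K with
  | zero => simp
  | succ K ih =>
    have hrx : r ^ (K+1) ≤ (r+x)^(K+1) := pow_le_pow_left₀ hr (by linarith) _
    have h3 : x * r^(K+1) ≤ x * (r+x)^(K+1) := mul_le_mul_of_nonneg_left hrx hx
    calc (r+x)^(K+2) = (r+x)^(K+1) * (r+x) := by ring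
    _ ≤ (r^(K+1) + (K+1:ℝ)*x*(r+x)^K) * (r+x) := by
        apply mul_le_mul_of_nonneg_right ih (by linarith)
    _ = r^(K+2) + x*r^(K+1) + (K+1:ℝ)*x*(r+x)^(K+1) := by ring
    _ ≤ r^(K+2) + x*(r+x)^(K+1) + (K+1:ℝ)*x*(r+x)^(K+1) := by linarith
    _ = r^(K+2) + ((K+1:ℕ)+1:ℝ)*x*(r+x)^(K+1) := by push_cast; ring

lemma aux_sqrt_sum (N₀ m : ℕ) :
    ∑ i ∈ Finset.Icc (N₀+1) (N₀+m), 1 / Real.sqrt i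
      ≤ 2 * (Real.sqrt (N₀+m) - Real.sqrt N₀) := by
  induction m with
  | zero => simp
  | succ m ih =>
    rw [show N₀ + (m+1) = (N₀+m) + 1 from rfl,
        Finset.sum_Icc_succ_top (by omega)]
    have key : Real.sqrt ((N₀+m:ℕ)+1) * (Real.sqrt ((N₀+m:ℕ)+1) - Real.sqrt (N₀+m:ℕ)) * 2 ≥ 1 := by
      set a := Real.sqrt ((N₀+m:ℕ)+1) with ha
      set c := Real.sqrt (N₀+m:ℕ) with hc
      have ha2 : a^2 = ((N₀+m:ℕ):ℝ)+1 := Real.sq_sqrt (by positivity)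
      have hc2 : c^2 = ((N₀+m:ℕ):ℝ) := Real.sq_sqrt (by positivity)
      have hc0 : 0 ≤ c := Real.sqrt_nonneg _
      nlinarith [sq_nonneg (a - c)]
    have ha0 : 0 < Real.sqrt ((N₀+m:ℕ)+1) := Real.sqrt_pos.mpr (by positivity)
    have key2 : 1 / Real.sqrt ((N₀+m:ℕ)+1) ≤ 2 * (Real.sqrt ((N₀+m:ℕ)+1) - Real.sqrt (N₀+m:ℕ)) := by
      rw [div_le_iff₀ ha0]; nlinarith
    push_cast at key2 ih ⊢
    ring_nf at key2 ih ⊢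
    linarith

theorem stmt_13 (N₀ m K : ℕ) (hN₀ : 1 ≤ N₀) (hm : 1 ≤ m) (hK : 1 ≤ K)
    (r b η : ℝ) (hr0 : 0 < r) (hr1 : r ≤ 1) (hb : 0 ≤ b)
    (hKb : ((K : ℝ) - 1) * (b / Real.sqrt N₀) < r)
    (hη : η = r / (r - ((K : ℝ) - 1) * (b / Real.sqrt N₀))) :
    (∑ i ∈ Finset.Icc (N₀ + 1) (N₀ + m), (r + b / Real.sqrt i) ^ K)
      ≤ (m : ℝ) * r ^ K
          + 2 * η * K * r ^ (K - 1) * b * (Real.sqrt (N₀ + m) - Real.sqrt N₀)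
    ∧ (m : ℝ) * r ^ K
          + 2 * η * K * r ^ (K - 1) * b * (Real.sqrt (N₀ + m) - Real.sqrt N₀)
      ≤ (m : ℝ) * r ^ K + 2 * η * K * r ^ (K - 1) * b * Real.sqrt m := by
  obtain ⟨K', rfl⟩ : ∃ K', K = K' + 1 := ⟨K - 1, by omega⟩
  have hKc : ((K'+1 : ℕ) : ℝ) - 1 = (K' : ℝ) := by push_cast; ring
  rw [hKc] at hKb hη
  have hK1 : (K' + 1) - 1 = K' := rfl
  rw [hK1]
  push_cast
  have hrne : r ≠ 0 := hr0.ne'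
  have hsN : 0 < Real.sqrt N₀ := Real.sqrt_pos.mpr (by positivity)
  set x₀ : ℝ := b / Real.sqrt N₀ with hx₀
  have hx₀0 : 0 ≤ x₀ := by positivity
  have hd0 : 0 < r - (K' : ℝ) * x₀ := by linarith
  have hη0 : 0 < η := by rw [hη]; positivity
  -- termwise bound
  have term : ∀ i ∈ Finset.Icc (N₀ + 1) (N₀ + m),
      (r + b / Real.sqrt i) ^ (K'+1)
        ≤ r ^ (K'+1) + (η * (K'+1) * r ^ K' * b) * (1 / Real.sqrt i) := by
    intro i hi
    simp only [Finset.mem_Icc] at hi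
    have hsi : 0 < Real.sqrt i := Real.sqrt_pos.mpr (by exact_mod_cast (by omega : 0 < i))
    set x : ℝ := b / Real.sqrt i with hx
    have hx0 : 0 ≤ x := by positivity
    have hxx₀ : x ≤ x₀ := by
      apply div_le_div_of_nonneg_left hb hsN
      exact Real.sqrt_le_sqrt (by exact_mod_cast Nat.cast_le.mpr (by omega))
    have hdi : 0 < r - (K' : ℝ) * x := by nlinarith
    set t : ℝ := x / r with ht
    have ht0 : 0 ≤ t := by positivity
    have hnt : (K' : ℝ) * t < 1 := by
      rw [ht, ← mul_div_assoc, div_lt_one hr0]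
      nlinarith
    have hfact : r + x = r * (1 + t) := by rw [ht]; field_simp
    have hb1 : (1 + t) ^ K' ≤ 1 / (1 - (K' : ℝ) * t) := aux_bern K' t ht0 hnt
    have hb2 : (1 : ℝ) / (1 - (K' : ℝ) * t) = r / (r - (K' : ℝ) * x) := by
      have e : 1 - (K' : ℝ) * t = (r - (K' : ℝ) * x) / r := by
        rw [ht]; field_simp
      rw [e, one_div_div]
    have hb3 : r / (r - (K' : ℝ) * x) ≤ η := by
      rw [hη]
      apply div_le_div_of_nonneg_left hr0.le hd0
      nlinarith
    have hpow : (r + x) ^ K' ≤ r ^ K' * η := by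
      calc (r + x) ^ K' = r ^ K' * (1 + t) ^ K' := by rw [hfact, mul_pow]
      _ ≤ r ^ K' * η := by
          apply mul_le_mul_of_nonneg_left _ (by positivity)
          calc (1+t)^K' ≤ 1 / (1 - (K':ℝ)*t) := hb1
          _ = r / (r - (K':ℝ)*x) := hb2
          _ ≤ η := hb3
    calc (r + x) ^ (K'+1) ≤ r ^ (K'+1) + ((K':ℝ)+1) * x * (r+x)^K' :=
          aux_pow K' r x hr0.le hx0
    _ ≤ r ^ (K'+1) + ((K':ℝ)+1) * x * (r ^ K' * η) := by
        apply add_le_add le_rfl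
        apply mul_le_mul_of_nonneg_left hpow (by positivity)
    _ = r ^ (K'+1) + (η * ((K':ℝ)+1) * r ^ K' * b) * (1 / Real.sqrt i) := by
        rw [hx]; field_simp
  have hsum := Finset.sum_le_sum term
  have hsplit : ∑ i ∈ Finset.Icc (N₀ + 1) (N₀ + m),
      (r ^ (K'+1) + (η * ((K':ℝ)+1) * r ^ K' * b) * (1 / Real.sqrt i))
      = (m : ℝ) * r ^ (K'+1)
        + (η * ((K':ℝ)+1) * r ^ K' * b) * ∑ i ∈ Finset.Icc (N₀ + 1) (N₀ + m), (1 / Real.sqrt i) := by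
    rw [Finset.sum_add_distrib, Finset.sum_const, ← Finset.mul_sum, Nat.card_Icc]
    have : N₀ + m + 1 - (N₀ + 1) = m := by omega
    rw [this, nsmul_eq_mul]
  have hC : 0 ≤ η * ((K':ℝ)+1) * r ^ K' * b := by positivity
  have hS := aux_sqrt_sum N₀ m
  have first : (∑ i ∈ Finset.Icc (N₀ + 1) (N₀ + m), (r + b / Real.sqrt i) ^ (K'+1))
      ≤ (m : ℝ) * r ^ (K'+1)
        + 2 * η * ((K':ℝ)+1) * r ^ K' * b * (Real.sqrt (N₀ + m) - Real.sqrt N₀) := by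
    have := mul_le_mul_of_nonneg_left hS hC
    calc (∑ i ∈ Finset.Icc (N₀ + 1) (N₀ + m), (r + b / Real.sqrt i) ^ (K'+1))
        ≤ (m : ℝ) * r ^ (K'+1)
          + (η * ((K':ℝ)+1) * r ^ K' * b) * ∑ i ∈ Finset.Icc (N₀ + 1) (N₀ + m), (1 / Real.sqrt i) := by
          rw [← hsplit]; exact hsum
    _ ≤ (m : ℝ) * r ^ (K'+1)
          + (η * ((K':ℝ)+1) * r ^ K' * b) * (2 * (Real.sqrt (N₀+m) - Real.sqrt N₀)) := by linarith
    _ = (m : ℝ) * r ^ (K'+1)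
          + 2 * η * ((K':ℝ)+1) * r ^ K' * b * (Real.sqrt (N₀ + m) - Real.sqrt N₀) := by ring
  refine ⟨first, ?_⟩
  have hsqrt : Real.sqrt (N₀ + m) - Real.sqrt N₀ ≤ Real.sqrt m := by
    have h1 : Real.sqrt ((N₀:ℝ) + m) ≤ Real.sqrt N₀ + Real.sqrt m := by
      have h2 : ((N₀:ℝ) + m) ≤ (Real.sqrt N₀ + Real.sqrt m)^2 := by
        have e1 : Real.sqrt (N₀:ℝ) ^ 2 = (N₀:ℝ) := Real.sq_sqrt (by positivity)
        have e2 : Real.sqrt (m:ℝ) ^ 2 = (m:ℝ) := Real.sq_sqrt (by positivity)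
        nlinarith [Real.sqrt_nonneg (N₀:ℝ), Real.sqrt_nonneg (m:ℝ),
          mul_nonneg (Real.sqrt_nonneg (N₀:ℝ)) (Real.sqrt_nonneg (m:ℝ))]
      calc Real.sqrt ((N₀:ℝ) + m) ≤ Real.sqrt ((Real.sqrt N₀ + Real.sqrt m)^2) :=
            Real.sqrt_le_sqrt h2
      _ = Real.sqrt N₀ + Real.sqrt m := Real.sqrt_sq (by positivity)
    linarith
  have hC2 : 0 ≤ 2 * η * ((K':ℝ)+1) * r ^ K' * b := by positivity
  have := mul_le_mul_of_nonneg_left hsqrt hC2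
  linarith
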